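/- Let k ≥ 1 and n ≥ 2k be integers. Then S(σ_{n,2k} + X₁) = S(σ_{n+1,2k+1} + X₁), where X₁ denotes the Boolean function given by the first coordinate. -/

import Mathlib

/-- Exponential sum of a Boolean function in `N` variables. -/
def expSum {N : ℕ} (G : (Fin N → ZMod 2) → ZMod 2) : ℤ :=
  ∑ x : Fin N → ZMod 2, (-1 : ℤ) ^ (G x).val

/-- Elementary symmetric Boolean polynomial of degree `k` in `n` variables. -/
def sigma (n k : ℕ) (x : Fin n → ZMod 2) : ZMod 2 :=
  ∑ A ∈ Finset.powersetCard k (Finset.univ : Finset (Fin n)), ∏ i ∈ A, x i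

open Finset

private lemma zmod2_cases (a : ZMod 2) : a = 0 ∨ a = 1 := by revert a; decide

/-- Hamming weight. -/
def wt {N : ℕ} (x : Fin N → ZMod 2) : ℕ := #(univ.filter fun i => x i = 1)

lemma wt_eq_sum {N : ℕ} (x : Fin N → ZMod 2) : wt x = ∑ i, (x i).val := by
  rw [wt, Finset.card_filter]
  refine Finset.sum_congr rfl fun i _ => ?_
  rcases zmod2_cases (x i) with h | h <;> simp [h, ZMod.val_one]

lemma wt_cons {N : ℕ} (ε : ZMod 2) (y : Fin N → ZMod 2) :
    wt (Fin.cons ε y) = ε.val + wt y := by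
  rw [wt_eq_sum, wt_eq_sum, Fin.sum_univ_succ]
  simp

lemma sigma_eq (n j : ℕ) (x : Fin n → ZMod 2) :
    sigma n j x = (Nat.choose (wt x) j : ZMod 2) := by
  have hprod : ∀ A : Finset (Fin n), (∏ i ∈ A, x i)
      = if A ⊆ univ.filter (fun i => x i = 1) then (1 : ZMod 2) else 0 := by
    intro A
    split_ifs with h
    · exact Finset.prod_eq_one fun i hi => (Finset.mem_filter.mp (h hi)).2
    · obtain ⟨i, hiA, hix⟩ : ∃ i ∈ A, ¬(x i = 1) := by
        by_contra hc
        push_neg at hc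
        exact h fun i hi => Finset.mem_filter.mpr ⟨Finset.mem_univ i, hc i hi⟩
      refine Finset.prod_eq_zero hiA ?_
      rcases zmod2_cases (x i) with h0 | h1
      · exact h0
      · exact absurd h1 hix
  rw [sigma, Finset.sum_congr rfl fun A _ => hprod A, Finset.sum_boole]
  have hfil : (powersetCard j (univ : Finset (Fin n))).filter
      (fun A => A ⊆ univ.filter (fun i => x i = 1))
      = powersetCard j (univ.filter (fun i => x i = 1)) := by
    ext A
    simp only [Finset.mem_filter, Finset.mem_powersetCard, Finset.subset_univ, true_and]
    tauto
  rw [hfil, Finset.card_powersetCard]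
  rfl

/-- The equivalence between Boolean vectors and subsets. -/
def vecEquiv (N : ℕ) : (Fin N → ZMod 2) ≃ Finset (Fin N) where
  toFun x := univ.filter fun i => x i = 1
  invFun S := fun i => if i ∈ S then 1 else 0
  left_inv x := by
    funext i
    rcases zmod2_cases (x i) with h | h <;> simp [h]
  right_inv S := by
    ext i
    by_cases h : i ∈ S <;> simp [h]

lemma sum_wt (N : ℕ) (F : ℕ → ℤ) :
    ∑ x : Fin N → ZMod 2, F (wt x) = ∑ w ∈ range (N + 1), (N.choose w : ℤ) * F w := by
  have h1 : ∑ x : Fin N → ZMod 2, F (wt x) = ∑ S : Finset (Fin N), F #S :=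
    Equiv.sum_comp (vecEquiv N) fun S => F #S
  rw [h1, ← Finset.powerset_univ, Finset.sum_powerset, Finset.card_univ, Fintype.card_fin]
  refine Finset.sum_congr rfl fun w _ => ?_
  have : ∀ S ∈ powersetCard w (univ : Finset (Fin N)), F #S = F w := fun S hS => by
    rw [(Finset.mem_powersetCard.mp hS).2]
  rw [Finset.sum_congr rfl this, Finset.sum_const, Finset.card_powersetCard, Finset.card_univ,
    Fintype.card_fin, nsmul_eq_mul]

private lemma negpow_congr {a b : ℕ} (h : a % 2 = b % 2) : ((-1 : ℤ)) ^ a = (-1) ^ b := by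
  conv_lhs => rw [← Nat.div_add_mod a 2]
  conv_rhs => rw [← Nat.div_add_mod b 2]
  rw [pow_add, pow_add, pow_mul, pow_mul, h]
  simp

private lemma negpow_natCast_val (m : ℕ) : ((-1 : ℤ)) ^ ((m : ZMod 2)).val = (-1) ^ m := by
  rw [ZMod.val_natCast]
  exact negpow_congr (by omega)

private lemma negpow_natCast_val_add_one (m : ℕ) :
    ((-1 : ℤ)) ^ (((m : ZMod 2) + 1)).val = -(-1) ^ m := by
  have h : ((m : ZMod 2) + 1) = ((m + 1 : ℕ) : ZMod 2) := by push_cast; ring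
  rw [h, negpow_natCast_val, pow_succ]
  ring

lemma sum_zmod2 {M : Type*} [AddCommMonoid M] (h : ZMod 2 → M) :
    ∑ ε : ZMod 2, h ε = h 0 + h 1 := by
  have : (univ : Finset (ZMod 2)) = {0, 1} := by decide
  rw [this, Finset.sum_insert (by decide), Finset.sum_singleton]

lemma choose_mod_two (a b : ℕ) :
    Nat.choose a b ≡ Nat.choose (a % 2) (b % 2) * Nat.choose (a / 2) (b / 2) [MOD 2] := by
  haveI : Fact (Nat.Prime 2) := ⟨Nat.prime_two⟩
  have h := Choose.choose_modEq_choose_mod_mul_choose_div (n := a) (k := b) (p := 2)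
  have h2 := (ZMod.intCast_eq_intCast_iff _ _ _).mpr h
  push_cast at h2
  exact (ZMod.natCast_eq_natCast_iff _ _ _).mp (by exact_mod_cast h2)

private lemma consEquiv_apply' {N : ℕ} (ε : ZMod 2) (y : Fin N → ZMod 2) :
    (Fin.consEquiv fun _ : Fin (N + 1) => ZMod 2) (ε, y) = Fin.cons ε y := rfl

lemma expSum_eq (N j : ℕ) :
    expSum (fun x : Fin (N + 1) → ZMod 2 => sigma (N + 1) j x + x 0) =
      ∑ w ∈ range (N + 1), (N.choose w : ℤ) *
        ((-1 : ℤ) ^ Nat.choose w j - (-1) ^ Nat.choose (w + 1) j) := by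
  rw [expSum, ← Equiv.sum_comp (Fin.consEquiv fun _ : Fin (N + 1) => ZMod 2)
      (fun x => (-1 : ℤ) ^ ((sigma (N + 1) j x + x 0).val)), Fintype.sum_prod_type]
  simp only [consEquiv_apply', Fin.cons_zero, sigma_eq, wt_cons]
  rw [sum_zmod2]
  simp only [ZMod.val_zero, ZMod.val_one, add_zero, zero_add]
  rw [← Finset.sum_add_distrib, ← sum_wt N
    (fun w => (-1 : ℤ) ^ Nat.choose w j - (-1) ^ Nat.choose (w + 1) j)]
  refine Finset.sum_congr rfl fun y _ => ?_
  rw [negpow_natCast_val, negpow_natCast_val_add_one, add_comm 1 (wt y)]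
  ring

lemma sum_range_two_mul (M : ℕ) (h : ℕ → ℤ) :
    ∑ w ∈ range (2 * M), h w = ∑ m ∈ range M, (h (2 * m) + h (2 * m + 1)) := by
  induction M with
  | zero => simp
  | succ M ih =>
      rw [show 2 * (M + 1) = 2 * M + 1 + 1 by ring, Finset.sum_range_succ,
        Finset.sum_range_succ, ih, Finset.sum_range_succ]
      ring

lemma core (k N : ℕ) (hk : 1 ≤ k) :
    ∑ w ∈ range (N + 1), (N.choose w : ℤ) *
        ((-1 : ℤ) ^ Nat.choose w (2 * k) - (-1) ^ Nat.choose (w + 1) (2 * k)) =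
      ∑ w ∈ range (N + 2), ((N + 1).choose w : ℤ) *
        ((-1 : ℤ) ^ Nat.choose w (2 * k + 1) - (-1) ^ Nat.choose (w + 1) (2 * k + 1)) := by
  set u : ℕ → ℤ := fun m => (-1 : ℤ) ^ Nat.choose m k with hu
  set a : ℕ → ℤ := fun m => (N.choose (2 * m + 1) : ℤ) with ha
  -- sign specializations via Lucas
  have s1 : ∀ m, (-1 : ℤ) ^ Nat.choose (2 * m) (2 * k) = u m := by
    intro m
    have h := choose_mod_two (2 * m) (2 * k)
    rw [show 2 * m % 2 = 0 by omega, show 2 * m / 2 = m by omega,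
      show 2 * k % 2 = 0 by omega, show 2 * k / 2 = k by omega] at h
    simpa using negpow_congr h
  have s2 : ∀ m, (-1 : ℤ) ^ Nat.choose (2 * m + 1) (2 * k) = u m := by
    intro m
    have h := choose_mod_two (2 * m + 1) (2 * k)
    rw [show (2 * m + 1) % 2 = 1 by omega, show (2 * m + 1) / 2 = m by omega,
      show 2 * k % 2 = 0 by omega, show 2 * k / 2 = k by omega] at h
    simpa using negpow_congr h
  have s3 : ∀ m, (-1 : ℤ) ^ Nat.choose (2 * m) (2 * k + 1) = 1 := by
    intro m
    have h := choose_mod_two (2 * m) (2 * k + 1)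
    rw [show 2 * m % 2 = 0 by omega, show 2 * m / 2 = m by omega,
      show (2 * k + 1) % 2 = 1 by omega, show (2 * k + 1) / 2 = k by omega] at h
    simpa using negpow_congr h
  have s4 : ∀ m, (-1 : ℤ) ^ Nat.choose (2 * m + 1) (2 * k + 1) = u m := by
    intro m
    have h := choose_mod_two (2 * m + 1) (2 * k + 1)
    rw [show (2 * m + 1) % 2 = 1 by omega, show (2 * m + 1) / 2 = m by omega,
      show (2 * k + 1) % 2 = 1 by omega, show (2 * k + 1) / 2 = k by omega] at h
    simpa using negpow_congr h
  have hu0 : u 0 = 1 := by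
    rw [hu]
    simp [Nat.choose_eq_zero_of_lt hk]
  -- extend both sums to range (2 * (N + 1))
  have hext1 : ∑ w ∈ range (N + 1), (N.choose w : ℤ) *
        ((-1 : ℤ) ^ Nat.choose w (2 * k) - (-1) ^ Nat.choose (w + 1) (2 * k)) =
      ∑ w ∈ range (2 * (N + 1)), (N.choose w : ℤ) *
        ((-1 : ℤ) ^ Nat.choose w (2 * k) - (-1) ^ Nat.choose (w + 1) (2 * k)) := by
    refine Finset.sum_subset (Finset.range_subset_range.mpr (by omega)) fun w _ hw => ?_
    rw [Nat.choose_eq_zero_of_lt (by simpa using hw)]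
    simp
  have hext2 : ∑ w ∈ range (N + 2), ((N + 1).choose w : ℤ) *
        ((-1 : ℤ) ^ Nat.choose w (2 * k + 1) - (-1) ^ Nat.choose (w + 1) (2 * k + 1)) =
      ∑ w ∈ range (2 * (N + 1)), ((N + 1).choose w : ℤ) *
        ((-1 : ℤ) ^ Nat.choose w (2 * k + 1) - (-1) ^ Nat.choose (w + 1) (2 * k + 1)) := by
    refine Finset.sum_subset (Finset.range_subset_range.mpr (by omega)) fun w _ hw => ?_
    rw [Nat.choose_eq_zero_of_lt (by simp at hw ⊢; omega)]
    simp
  rw [hext1, hext2, sum_range_two_mul, sum_range_two_mul]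
  -- evaluate each paired term
  have hL : ∀ m, ((N.choose (2 * m) : ℤ) *
        ((-1 : ℤ) ^ Nat.choose (2 * m) (2 * k) - (-1) ^ Nat.choose (2 * m + 1) (2 * k)) +
      (N.choose (2 * m + 1) : ℤ) *
        ((-1 : ℤ) ^ Nat.choose (2 * m + 1) (2 * k) - (-1) ^ Nat.choose (2 * m + 1 + 1) (2 * k)))
        = a m * (u m - u (m + 1)) := by
    intro m
    rw [show 2 * m + 1 + 1 = 2 * (m + 1) by ring, s1, s2, s1]
    ring
  have hR : ∀ m, (((N + 1).choose (2 * m) : ℤ) *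
        ((-1 : ℤ) ^ Nat.choose (2 * m) (2 * k + 1) - (-1) ^ Nat.choose (2 * m + 1) (2 * k + 1)) +
      ((N + 1).choose (2 * m + 1) : ℤ) *
        ((-1 : ℤ) ^ Nat.choose (2 * m + 1) (2 * k + 1) -
          (-1) ^ Nat.choose (2 * m + 1 + 1) (2 * k + 1)))
        = (1 - u m) * (((N + 1).choose (2 * m) : ℤ) - ((N + 1).choose (2 * m + 1) : ℤ)) := by
    intro m
    rw [show 2 * m + 1 + 1 = 2 * (m + 1) by ring, s3, s4, s3]
    ring
  rw [Finset.sum_congr rfl fun m _ => hL m, Finset.sum_congr rfl fun m _ => hR m]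
  -- peel first term on the right, last term on the left
  conv_lhs => rw [Finset.sum_range_succ]
  conv_rhs => rw [Finset.sum_range_succ']
  have haN : a N = 0 := by
    rw [ha]
    simp [Nat.choose_eq_zero_of_lt (by omega : N < 2 * N + 1)]
  rw [haN, hu0]
  simp only [mul_zero, zero_mul, add_zero, sub_self]
  -- Pascal + telescoping
  set G : ℕ → ℤ := fun m => u m * a m - a m with hG
  rw [← sub_eq_zero, ← Finset.sum_sub_distrib]
  have hterm : ∀ m ∈ range N, (a m * (u m - u (m + 1)) -
      (1 - u (m + 1)) * (((N + 1).choose (2 * (m + 1)) : ℤ) -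
        ((N + 1).choose (2 * (m + 1) + 1) : ℤ))) = G m - G (m + 1) := by
    intro m _
    have p1 : ((N + 1).choose (2 * (m + 1)) : ℤ) =
        (N.choose (2 * m + 1) : ℤ) + (N.choose (2 * m + 2) : ℤ) := by
      rw [show 2 * (m + 1) = (2 * m + 1) + 1 by ring, Nat.choose_succ_succ]
      push_cast
      ring
    have p2 : ((N + 1).choose (2 * (m + 1) + 1) : ℤ) =
        (N.choose (2 * m + 2) : ℤ) + (N.choose (2 * m + 3) : ℤ) := by
      rw [show 2 * (m + 1) + 1 = (2 * m + 2) + 1 by ring, Nat.choose_succ_succ]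
      push_cast
      ring
    rw [p1, p2, hG]
    simp only [ha]
    rw [show 2 * (m + 1) + 1 = 2 * m + 3 by ring]
    ring
  rw [Finset.sum_congr rfl hterm, Finset.sum_range_sub' G N, hG]
  simp only [hu0, haN]
  ring

/-- For `k ≥ 1` and `n ≥ 2k`, `S(σ_{n,2k} + X₁) = S(σ_{n+1,2k+1} + X₁)`. -/
theorem exponential_sum_linear_perturbation_shift
    (k n : ℕ) (hk : 1 ≤ k) (hn : 2 * k ≤ n) :
    expSum (fun x : Fin n → ZMod 2 => sigma n (2 * k) x + x ⟨0, by omega⟩) =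
      expSum (fun x : Fin (n + 1) → ZMod 2 =>
        sigma (n + 1) (2 * k + 1) x + x ⟨0, by omega⟩) := by
  obtain ⟨N, rfl⟩ : ∃ N, n = N + 1 := ⟨n - 1, by omega⟩
  simp only [Fin.mk_zero]
  rw [expSum_eq N (2 * k), expSum_eq (N + 1) (2 * k + 1)]
  exact core k N hk
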